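/- Let K be a field, n ≥ 1, and V a linear subspace of M_n(K) with codimension strictly less than n-1. Then the trace-zero matrices sl_n(K) are spanned by the commutators [A,B] = AB - BA with A, B ∈ V. -/

import Mathlib

open Matrix Module LinearMap

section Aux

variable {K : Type*} [Field K] {n : ℕ}

private lemma dot_repr (f : (Fin n → K) →ₗ[K] K) (x : Fin n → K) :
    f x = ∑ j, x j * f (fun k => if j = k then 1 else 0) := by
  conv_lhs => rw [pi_eq_sum_univ x]
  rw [map_sum]
  exact Finset.sum_congr rfl fun j _ => by rw [_root_.map_smul, smul_eq_mul]

private lemma exists_dual_pair (u w : Fin n → K) (h : w ∉ Submodule.span K {u}) :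
    ∃ z : Fin n → K, z ⬝ᵥ u = 0 ∧ z ⬝ᵥ w = 1 := by
  obtain ⟨f, hfw, hmap⟩ := Submodule.exists_dual_map_eq_bot_of_notMem h inferInstance
  have hfu : f u = 0 := by
    have : f u ∈ (Submodule.span K {u}).map f :=
      Submodule.mem_map_of_mem (Submodule.mem_span_singleton_self u)
    rwa [hmap, Submodule.mem_bot] at this
  refine ⟨fun j => (f w)⁻¹ * f (fun k => if j = k then 1 else 0), ?_, ?_⟩
  · have : (fun j => (f w)⁻¹ * f (fun k => if j = k then (1:K) else 0)) ⬝ᵥ u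
        = (f w)⁻¹ * f u := by
      rw [dot_repr f u, Finset.mul_sum]
      exact Finset.sum_congr rfl fun j _ => by ring
    rw [this, hfu, mul_zero]
  · have : (fun j => (f w)⁻¹ * f (fun k => if j = k then (1:K) else 0)) ⬝ᵥ w
        = (f w)⁻¹ * f w := by
      rw [dot_repr f w, Finset.mul_sum]
      exact Finset.sum_congr rfl fun j _ => by ring
    rw [this, inv_mul_cancel₀ hfw]

private lemma vmv_mulVec (a χ x : Fin n → K) :
    Matrix.vecMulVec a χ *ᵥ x = (χ ⬝ᵥ x) • a := by
  funext i
  simp only [Matrix.mulVec, dotProduct, Matrix.vecMulVec_apply, Pi.smul_apply, smul_eq_mul,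
    Finset.sum_mul]
  exact Finset.sum_congr rfl fun j _ => by ring

private lemma vecMul_vmv (w a χ : Fin n → K) :
    w ᵥ* Matrix.vecMulVec a χ = (w ⬝ᵥ a) • χ := by
  funext j
  simp only [Matrix.vecMul, dotProduct, Matrix.vecMulVec_apply, Pi.smul_apply, smul_eq_mul,
    Finset.sum_mul]
  exact Finset.sum_congr rfl fun i _ => by ring

private lemma scalar_of_eigen (hn : 0 < n) (C : Matrix (Fin n) (Fin n) K)
    (h : ∀ v : Fin n → K, ∃ c : K, C *ᵥ v = c • v) :
    ∃ c : K, C = c • (1 : Matrix (Fin n) (Fin n) K) := by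
  have hcol : ∀ j, ∃ c : K, ∀ i, C i j = if i = j then c else 0 := by
    intro j
    obtain ⟨c, hc⟩ := h (Pi.single j 1)
    refine ⟨c, fun i => ?_⟩
    have := congrFun hc i
    rw [Matrix.mulVec_single] at this
    simp only [Pi.smul_apply, Pi.single_apply, smul_eq_mul, mul_one, Matrix.col_apply,
      MulOpposite.op_one, one_smul] at this
    rw [this]
    split <;> simp
  choose c hc using hcol
  set i0 : Fin n := ⟨0, hn⟩
  have hCe : ∀ k : Fin n, C *ᵥ Pi.single k (1:K) = c k • (Pi.single k 1 : Fin n → K) := by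
    intro k
    funext i
    rw [Matrix.mulVec_single]
    simp only [Pi.smul_apply, Pi.single_apply, smul_eq_mul, mul_one, Matrix.col_apply,
      MulOpposite.op_one, one_smul, hc k i]
    split <;> simp
  have hceq : ∀ j, c j = c i0 := by
    intro j
    by_cases hj : j = i0
    · rw [hj]
    · obtain ⟨d, hd⟩ := h (Pi.single i0 1 + Pi.single j 1)
      rw [Matrix.mulVec_add, hCe, hCe] at hd
      have h1 := congrFun hd i0
      have h2 := congrFun hd j
      simp [Pi.single_apply, hj, Ne.symm hj] at h1 h2
      rw [h1, h2]
  refine ⟨c i0, ?_⟩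
  ext i j
  rw [hc j i]
  by_cases hij : i = j
  · subst hij; simp [Matrix.one_apply, hceq i]
  · simp [Matrix.one_apply, hij]

/-- `M ↦ M *ᵥ v` as a linear map in the matrix. -/
private def mulVecL (v : Fin n → K) : Matrix (Fin n) (Fin n) K →ₗ[K] (Fin n → K) where
  toFun M := M *ᵥ v
  map_add' A B := Matrix.add_mulVec A B v
  map_smul' c A := Matrix.smul_mulVec c A v

/-- `M ↦ g ᵥ* M` as a linear map in the matrix. -/
private def vecMulL (g : Fin n → K) : Matrix (Fin n) (Fin n) K →ₗ[K] (Fin n → K) where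
  toFun M := g ᵥ* M
  map_add' A B := Matrix.vecMul_add A B g
  map_smul' c A := by
    funext j
    simp only [Matrix.vecMul, dotProduct, Matrix.smul_apply, RingHom.id_apply, Pi.smul_apply,
      smul_eq_mul, Finset.mul_sum]
    exact Finset.sum_congr rfl fun i _ => by ring

private def dotL (v : Fin n → K) : (Fin n → K) →ₗ[K] K where
  toFun x := x ⬝ᵥ v
  map_add' a b := add_dotProduct a b v
  map_smul' c a := smul_dotProduct c a v

private def adL (C : Matrix (Fin n) (Fin n) K) :
    Matrix (Fin n) (Fin n) K →ₗ[K] Matrix (Fin n) (Fin n) K :=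
  LinearMap.mulLeft K C - LinearMap.mulRight K C

private lemma adL_apply (C M : Matrix (Fin n) (Fin n) K) : adL C M = C * M - M * C := rfl

private lemma key_rank (C : Matrix (Fin n) (Fin n) K) (v g : Fin n → K)
    (hv : C *ᵥ v ∉ Submodule.span K {v}) (hg : Cᵀ *ᵥ g ∉ Submodule.span K {g}) :
    2 * n ≤ finrank K (LinearMap.range (adL C)) + 2 := by
  set T := adL C with hT
  set R := LinearMap.range T with hR
  set ρ : R →ₗ[K] (Fin n → K) := (mulVecL v).comp R.subtype with hρdef
  have hρ : ∀ X : R, ρ X = (X : Matrix (Fin n) (Fin n) K) *ᵥ v := fun X => rfl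
  obtain ⟨χ, hχv, hχCv⟩ := exists_dual_pair v (C *ᵥ v) hv
  -- Claim 1: ρ is surjective
  have hsurj : LinearMap.range ρ = ⊤ := by
    rw [LinearMap.range_eq_top]
    intro t
    refine ⟨⟨T (Matrix.vecMulVec (-t) χ), LinearMap.mem_range_self T _⟩, ?_⟩
    rw [hρ]
    show (T (Matrix.vecMulVec (-t) χ)) *ᵥ v = t
    rw [adL_apply, Matrix.sub_mulVec, ← Matrix.mulVec_mulVec, ← Matrix.mulVec_mulVec,
      vmv_mulVec, vmv_mulVec, hχv, hχCv]
    simp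
  obtain ⟨z, hzg, hzCg⟩ := exists_dual_pair g (Cᵀ *ᵥ g) hg
  have hz1 : g ⬝ᵥ z = 0 := by rw [dotProduct_comm]; exact hzg
  have hz2 : (Cᵀ *ᵥ g) ⬝ᵥ z = 1 := by rw [dotProduct_comm]; exact hzCg
  -- Claim 2
  set l : (Fin n → K) →ₗ[K] K × K := (dotL v).prod (dotL (C *ᵥ v)) with hl
  have hA2 : n ≤ finrank K (LinearMap.ker l) + 2 := by
    have h1 := LinearMap.finrank_range_add_finrank_ker l
    have h2 : finrank K (LinearMap.range l) ≤ 2 := by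
      have h3 := Submodule.finrank_le (LinearMap.range l)
      rwa [show finrank K (K × K) = 2 by simp] at h3
    rw [Module.finrank_fin_fun] at h1
    omega
  have hsub : LinearMap.ker l ≤
      Submodule.map (vecMulL g) (Submodule.map R.subtype (LinearMap.ker ρ)) := by
    intro u hu
    rw [LinearMap.mem_ker] at hu
    have hu1 : u ⬝ᵥ v = 0 := congrArg Prod.fst hu
    have hu2 : u ⬝ᵥ (C *ᵥ v) = 0 := congrArg Prod.snd hu
    have hXv : (T (Matrix.vecMulVec z u)) *ᵥ v = 0 := by
      rw [adL_apply, Matrix.sub_mulVec, ← Matrix.mulVec_mulVec, ← Matrix.mulVec_mulVec,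
        vmv_mulVec, vmv_mulVec, hu1, hu2]
      simp
    have hgX : g ᵥ* (T (Matrix.vecMulVec z u)) = u := by
      rw [adL_apply, Matrix.vecMul_sub, ← Matrix.vecMul_vecMul, ← Matrix.vecMul_vecMul,
        vecMul_vmv, vecMul_vmv, hz1, ← Matrix.mulVec_transpose, hz2]
      simp
    refine Submodule.mem_map.mpr ⟨T (Matrix.vecMulVec z u),
      Submodule.mem_map.mpr ⟨⟨_, LinearMap.mem_range_self T _⟩, ?_, rfl⟩, hgX⟩
    rw [LinearMap.mem_ker, hρ]
    exact hXv
  have hfin1 := LinearMap.finrank_range_add_finrank_ker ρ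
  rw [hsurj, finrank_top, Module.finrank_fin_fun] at hfin1
  have hch : finrank K (LinearMap.ker l) ≤ finrank K (LinearMap.ker ρ) := by
    calc finrank K (LinearMap.ker l)
        ≤ finrank K (Submodule.map (vecMulL g) (Submodule.map R.subtype (LinearMap.ker ρ))) :=
          Submodule.finrank_mono hsub
      _ ≤ finrank K (Submodule.map R.subtype (LinearMap.ker ρ)) :=
          Submodule.finrank_map_le _ _
      _ = finrank K (LinearMap.ker ρ) := Submodule.finrank_map_subtype_eq _ _
  omega

private lemma dual_matrix_trace (f : Matrix (Fin n) (Fin n) K →ₗ[K] K) :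
    ∃ C : Matrix (Fin n) (Fin n) K, ∀ M, f M = (C * M).trace := by
  classical
  refine ⟨Matrix.of (fun i j => f (Matrix.single j i 1)), fun M => ?_⟩
  have hR : ((Matrix.of (fun i j => f (Matrix.single j i 1)) : Matrix (Fin n) (Fin n) K)
      * M).trace = ∑ k, ∑ i, f (Matrix.single i k 1) * M i k := by
    simp [Matrix.trace, Matrix.diag, Matrix.mul_apply]
  rw [hR, Finset.sum_comm]
  conv_lhs => rw [Matrix.matrix_eq_sum_single M]
  rw [map_sum]
  refine Finset.sum_congr rfl fun i _ => ?_
  rw [map_sum]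
  refine Finset.sum_congr rfl fun k _ => ?_
  rw [show Matrix.single i k (M i k) = M i k • Matrix.single i k 1 by
        rw [Matrix.smul_single, smul_eq_mul, mul_one],
    _root_.map_smul, smul_eq_mul, mul_comm]

end Aux

theorem span_commutators_eq_sl (K : Type*) [Field K] (n : ℕ) (hn : 0 < n)
    (V : Submodule K (Matrix (Fin n) (Fin n) K))
    (hV : n ^ 2 - Module.finrank K V < n - 1) :
    Submodule.span K {M : Matrix (Fin n) (Fin n) K | ∃ A ∈ V, ∃ B ∈ V, M = A * B - B * A}
      = LinearMap.ker (Matrix.traceLinearMap (Fin n) K K) := by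
  classical
  refine le_antisymm ?_ ?_
  · rw [Submodule.span_le]
    rintro M ⟨A, hA, B, hB, rfl⟩
    have : (A * B - B * A).trace = 0 := by
      rw [Matrix.trace_sub, Matrix.trace_mul_comm]
      exact sub_self _
    simpa [LinearMap.mem_ker] using this
  · intro x hx
    by_contra hxW
    obtain ⟨f, hfx, hmap⟩ := Submodule.exists_dual_map_eq_bot_of_notMem hxW inferInstance
    have hfW : ∀ y ∈ Submodule.span K
        {M : Matrix (Fin n) (Fin n) K | ∃ A ∈ V, ∃ B ∈ V, M = A * B - B * A}, f y = 0 := by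
      intro y hy
      have : f y ∈ Submodule.map f (Submodule.span K
          {M : Matrix (Fin n) (Fin n) K | ∃ A ∈ V, ∃ B ∈ V, M = A * B - B * A}) :=
        Submodule.mem_map_of_mem hy
      rwa [hmap, Submodule.mem_bot] at this
    obtain ⟨C, hC⟩ := dual_matrix_trace f
    -- define the pairing map Φ
    set Φ : Matrix (Fin n) (Fin n) K →ₗ[K] Module.Dual K V :=
      { toFun := fun X =>
          (Matrix.traceLinearMap (Fin n) K K).comp ((LinearMap.mulLeft K X).comp V.subtype)
        map_add' := fun X Y => by ext B; simp [add_mul]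
        map_smul' := fun c X => by ext B; simp [Matrix.smul_mul] } with hΦdef
    have hΦ : ∀ (X : Matrix (Fin n) (Fin n) K) (B : V), Φ X B = (X * (B : Matrix (Fin n) (Fin n) K)).trace :=
      fun X B => rfl
    have hΦsurj : LinearMap.range Φ = ⊤ := by
      rw [LinearMap.range_eq_top]
      intro h
      obtain ⟨gext, hgext⟩ := LinearMap.exists_extend h
      obtain ⟨D, hD⟩ := dual_matrix_trace gext
      refine ⟨D, ?_⟩
      ext B
      rw [hΦ, ← hD]
      exact LinearMap.congr_fun hgext B
    have hrnΦ := LinearMap.finrank_range_add_finrank_ker Φ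
    rw [hΦsurj, finrank_top, Subspace.dual_finrank_eq] at hrnΦ
    -- ψ := adL C restricted to V
    set T := adL C with hTdef
    set ψ : V →ₗ[K] Matrix (Fin n) (Fin n) K := T.comp V.subtype with hψdef
    have hψker : LinearMap.range ψ ≤ LinearMap.ker Φ := by
      rintro y ⟨⟨A, hA⟩, rfl⟩
      rw [LinearMap.mem_ker]
      ext ⟨B, hB⟩
      show ((C * A - A * C) * B).trace = 0
      have h1 : (C * A - A * C) * B = C * (A * B) - A * (C * B) := by noncomm_ring
      rw [h1, Matrix.trace_sub, Matrix.trace_mul_comm A (C * B), mul_assoc,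
        ← Matrix.trace_sub, ← mul_sub, ← hC]
      exact hfW _ (Submodule.subset_span ⟨A, hA, B, hB, rfl⟩)
    -- C is scalar, else contradiction with key_rank
    have hCscal : ∃ c : K, C = c • (1 : Matrix (Fin n) (Fin n) K) := by
      by_contra hsc
      have h1 : ¬ ∀ v : Fin n → K, ∃ c : K, C *ᵥ v = c • v :=
        fun h => hsc (scalar_of_eigen hn C h)
      push_neg at h1
      obtain ⟨v, hv'⟩ := h1
      have hv : C *ᵥ v ∉ Submodule.span K {v} := by
        rw [Submodule.mem_span_singleton]
        rintro ⟨a, ha⟩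
        exact hv' a ha.symm
      have hscT : ¬ ∀ w : Fin n → K, ∃ c : K, Cᵀ *ᵥ w = c • w := by
        intro h
        obtain ⟨c, hc⟩ := scalar_of_eigen hn Cᵀ h
        exact hsc ⟨c, by rw [← Matrix.transpose_transpose C, hc]; simp⟩
      push_neg at hscT
      obtain ⟨g, hg'⟩ := hscT
      have hg : Cᵀ *ᵥ g ∉ Submodule.span K {g} := by
        rw [Submodule.mem_span_singleton]
        rintro ⟨a, ha⟩
        exact hg' a ha.symm
      have hkey := key_rank C v g hv hg
      rw [← hTdef] at hkey
      -- dimension counting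
      have hs : n ^ 2 = finrank K (Matrix (Fin n) (Fin n) K) := by
        rw [Module.finrank_matrix]
        simp [pow_two]
      have hrV : finrank K V ≤ finrank K (Matrix (Fin n) (Fin n) K) :=
        Submodule.finrank_le V
      have hrnψ := LinearMap.finrank_range_add_finrank_ker ψ
      have hψle : finrank K (LinearMap.range ψ) ≤ finrank K (LinearMap.ker Φ) :=
        Submodule.finrank_mono hψker
      have hmapker : Submodule.map V.subtype (LinearMap.ker ψ) ≤ LinearMap.ker T := by
        rintro y ⟨A, hAk, rfl⟩
        exact hAk
      have hk1 : finrank K (LinearMap.ker ψ) ≤ finrank K (LinearMap.ker T) := by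
        calc finrank K (LinearMap.ker ψ)
            = finrank K (Submodule.map V.subtype (LinearMap.ker ψ)) :=
              (Submodule.finrank_map_subtype_eq _ _).symm
          _ ≤ finrank K (LinearMap.ker T) := Submodule.finrank_mono hmapker
      have hrnT := LinearMap.finrank_range_add_finrank_ker T
      rw [← hs] at hrnΦ hrnT hrV
      omega
    -- conclude
    obtain ⟨c, hc⟩ := hCscal
    rw [LinearMap.mem_ker] at hx
    have : f x = 0 := by
      rw [hC, hc, Matrix.smul_mul, one_mul, Matrix.trace_smul]
      have hxt : x.trace = 0 := hx
      rw [hxt, smul_zero]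
    exact hfx this
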